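/- Let ι be a finite type and T ≥ 1 an integer. For t = 1,…,T let ℓ_t : ι → [0,1] and I_t : ι → {0,1}, let N_t(i) = Σ_{τ=1}^{t} I_τ(i), and define the empirical-mean predictor m_t(i) = (Σ_{τ=1}^{t−1} I_τ(i)·ℓ_τ(i)) / max(1, N_{t−1}(i)). Then for every m* : ι → [0,1]: Σ_{t=1}^{T} Σ_{i∈ι} I_t(i)·(ℓ_t(i) − m_t(i))² ≤ Σ_{t=1}^{T} Σ_{i∈ι} I_t(i)·(ℓ_t(i) − m*(i))² + |ι|·ln(T) + |ι|. -/

import Mathlib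

open Finset

noncomputable def emp_n (a : ℕ → ℝ) (t : ℕ) : ℝ := ∑ τ ∈ Finset.Icc 1 t, a τ
noncomputable def emp_S (a x : ℕ → ℝ) (t : ℕ) : ℝ := ∑ τ ∈ Finset.Icc 1 t, a τ * x τ
noncomputable def emp_mu (a x : ℕ → ℝ) (t : ℕ) : ℝ := emp_S a x t / max 1 (emp_n a t)

lemma biasvar {F : Finset ℕ} (a x : ℕ → ℝ) (c μ n S : ℝ)
    (hn : ∑ τ ∈ F, a τ = n) (hS : ∑ τ ∈ F, a τ * x τ = S) (hSn : S = n * μ) :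
    ∑ τ ∈ F, a τ * (x τ - c) ^ 2 = (∑ τ ∈ F, a τ * (x τ - μ) ^ 2) + n * (c - μ) ^ 2 := by
  have h : ∀ τ ∈ F, a τ * (x τ - c) ^ 2 =
      a τ * (x τ - μ) ^ 2 + ((μ - c) * (2 * (a τ * x τ)) - (μ - c) * (c + μ) * a τ) := by
    intro τ _; ring
  rw [Finset.sum_congr rfl h, Finset.sum_add_distrib, Finset.sum_sub_distrib,
    ← Finset.mul_sum, ← Finset.mul_sum, ← Finset.mul_sum, hn, hS, hSn]
  ring

lemma emp_key (T : ℕ) (hT : 1 ≤ T) (a x : ℕ → ℝ)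
    (hx : ∀ t ∈ Finset.Icc 1 T, x t ∈ Set.Icc (0 : ℝ) 1)
    (ha : ∀ t ∈ Finset.Icc 1 T, a t = 0 ∨ a t = 1)
    (c : ℝ) (_hc : c ∈ Set.Icc (0 : ℝ) 1) :
    ∑ t ∈ Finset.Icc 1 T, a t * (x t - emp_mu a x (t - 1)) ^ 2 ≤
      (∑ t ∈ Finset.Icc 1 T, a t * (x t - c) ^ 2) + Real.log T + 1 := by
  -- basic facts
  have hann : ∀ t ≤ T, 0 ≤ emp_n a t := by
    intro t ht
    refine Finset.sum_nonneg fun τ hτ => ?_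
    rcases ha τ (Finset.mem_Icc.mpr ⟨(Finset.mem_Icc.mp hτ).1, le_trans (Finset.mem_Icc.mp hτ).2 ht⟩) with h | h <;> simp [h]
  have hnle : ∀ t ≤ T, emp_n a t ≤ t := by
    intro t ht
    have : emp_n a t ≤ ∑ τ ∈ Finset.Icc 1 t, (1 : ℝ) := by
      refine Finset.sum_le_sum fun τ hτ => ?_
      rcases ha τ (Finset.mem_Icc.mpr ⟨(Finset.mem_Icc.mp hτ).1, le_trans (Finset.mem_Icc.mp hτ).2 ht⟩) with h | h <;> simp [h]
    simpa [Nat.card_Icc] using this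
  -- the induction
  have main : ∀ t, t ≤ T →
      (emp_n a t = 0 ∨ 1 ≤ emp_n a t) ∧
      emp_S a x t = emp_n a t * emp_mu a x t ∧
      emp_mu a x t ∈ Set.Icc (0 : ℝ) 1 ∧
      (∑ τ ∈ Finset.Icc 1 t, a τ * (x τ - emp_mu a x (τ - 1)) ^ 2 ≤
        (∑ τ ∈ Finset.Icc 1 t, a τ * (x τ - emp_mu a x t) ^ 2) +
          ∑ τ ∈ Finset.Icc 1 t, a τ / max 1 (emp_n a τ)) ∧
      (∑ τ ∈ Finset.Icc 1 t, a τ / max 1 (emp_n a τ) ≤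
        Real.log (max 1 (emp_n a t)) + min 1 (emp_n a t)) := by
    intro t
    induction t with
    | zero =>
      intro _
      simp [emp_n, emp_S, emp_mu]
    | succ s ih =>
      intro hsT
      have hsT' : s ≤ T := Nat.le_of_succ_le hsT
      obtain ⟨ih1, ih2, ih3, ih4, ih5⟩ := ih hsT'
      have hmem : s + 1 ∈ Finset.Icc 1 T := Finset.mem_Icc.mpr ⟨Nat.succ_le_succ (Nat.zero_le s), hsT⟩
      have hxs := hx (s+1) hmem
      have hks : 0 ≤ emp_n a s := hann s hsT'
      have htop : ∀ f : ℕ → ℝ, ∑ τ ∈ Finset.Icc 1 (s+1), f τ = (∑ τ ∈ Finset.Icc 1 s, f τ) + f (s+1) :=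
        fun f => Finset.sum_Icc_succ_top (Nat.succ_le_succ (Nat.zero_le s)) f
      have hn1 : emp_n a (s+1) = emp_n a s + a (s+1) := htop a
      have hS1 : emp_S a x (s+1) = emp_S a x s + a (s+1) * x (s+1) := htop _
      rcases ha (s+1) hmem with h0 | h1
      · -- not visited: everything unchanged
        have hnn : emp_n a (s+1) = emp_n a s := by rw [hn1, h0, add_zero]
        have hSS : emp_S a x (s+1) = emp_S a x s := by rw [hS1, h0, zero_mul, add_zero]
        have hmm : emp_mu a x (s+1) = emp_mu a x s := by rw [emp_mu, emp_mu, hnn, hSS]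
        refine ⟨by rw [hnn]; exact ih1, by rw [hnn, hSS, hmm]; exact ih2, by rw [hmm]; exact ih3, ?_, ?_⟩
        · rw [htop, htop, htop, h0]
          simp only [zero_mul, add_zero, zero_div, hmm]
          linarith [ih4]
        · rw [htop, h0, hnn]
          simp only [zero_div, add_zero]
          exact ih5
      · -- visited
        set k := emp_n a s with hk
        set μ := emp_mu a x s with hμ
        have hnn : emp_n a (s+1) = k + 1 := by rw [hn1, h1]
        have hk1pos : (0:ℝ) < k + 1 := by linarith
        have hmax1 : max 1 (k + 1) = k + 1 := max_eq_right (by linarith)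
        have hSkμ : emp_S a x s = k * μ := ih2
        have hSS : emp_S a x (s+1) = k * μ + x (s+1) := by rw [hS1, h1, hSkμ, one_mul]
        have hmm : emp_mu a x (s+1) = (k * μ + x (s+1)) / (k + 1) := by
          rw [emp_mu, hSS, hnn, hmax1]
        have hSn1 : emp_S a x (s+1) = emp_n a (s+1) * emp_mu a x (s+1) := by
          rw [hSS, hmm, hnn]; field_simp
        have hμ01 : μ ∈ Set.Icc (0:ℝ) 1 := ih3
        have hmu01 : emp_mu a x (s+1) ∈ Set.Icc (0:ℝ) 1 := by
          rw [hmm]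
          constructor
          · apply div_nonneg _ (le_of_lt hk1pos)
            nlinarith [hμ01.1, hxs.1]
          · rw [div_le_one hk1pos]
            nlinarith [hμ01.2, hxs.2]
        refine ⟨Or.inr (by rw [hnn]; linarith), hSn1, hmu01, ?_, ?_⟩
        · -- regret recursion
          rw [htop, htop, htop]
          have hbv : ∑ τ ∈ Finset.Icc 1 s, a τ * (x τ - emp_mu a x (s+1)) ^ 2 =
              (∑ τ ∈ Finset.Icc 1 s, a τ * (x τ - μ) ^ 2) + k * (emp_mu a x (s+1) - μ) ^ 2 :=
            biasvar a x _ μ k (emp_S a x s) rfl rfl hSkμ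
          rw [hbv]
          have hstep : a (s+1) * (x (s+1) - emp_mu a x (s+1-1)) ^ 2 ≤
              k * (emp_mu a x (s+1) - μ) ^ 2 + a (s+1) * (x (s+1) - emp_mu a x (s+1)) ^ 2
                + a (s+1) / max 1 (emp_n a (s+1)) := by
            have hred : s + 1 - 1 = s := rfl
            rw [hred, h1, one_mul, one_mul, hnn, hmax1, ← hμ]
            have hmul : emp_mu a x (s+1) * (k+1) = k * μ + x (s+1) := by
              rw [hmm]; field_simp
            have hd2 : (x (s+1) - μ) ^ 2 ≤ 1 := by nlinarith [hxs.1, hxs.2, hμ01.1, hμ01.2]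
            have key : ((x (s+1) - μ) ^ 2 - (k * (emp_mu a x (s+1) - μ) ^ 2 + (x (s+1) - emp_mu a x (s+1)) ^ 2)) * (k+1) ≤ 1 := by
              nlinarith [sq_nonneg (x (s+1) - μ), sq_nonneg (emp_mu a x (s+1) - μ)]
            have := (le_div_iff₀ hk1pos).mpr key
            linarith
          linarith [ih4, hstep]
        · -- harmonic bound
          rw [htop, hnn, h1, hmax1]
          have hmin : min (1:ℝ) (k+1) = 1 := min_eq_left (by linarith)
          rw [hmin]
          rcases ih1 with hk0 | hk1
          · -- first visit
            have hs0 : ∑ τ ∈ Finset.Icc 1 s, a τ / max 1 (emp_n a τ) ≤ 0 := by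
              rw [hk0] at ih5
              simpa using ih5
            rw [hk0]
            norm_num [Real.log_one]
            linarith [hs0]
          · -- subsequent visit
            have hmaxk : max 1 k = k := max_eq_right hk1
            rw [hmaxk] at ih5
            have hmink : min (1:ℝ) k = 1 := min_eq_left hk1
            rw [hmink] at ih5
            have hlog : 1 / (k+1) ≤ Real.log (k+1) - Real.log k := by
              have hkpos : (0:ℝ) < k := by linarith
              have h2 : Real.log (k / (k+1)) ≤ k / (k+1) - 1 :=
                Real.log_le_sub_one_of_pos (div_pos hkpos hk1pos)
              rw [Real.log_div (ne_of_gt hkpos) (ne_of_gt hk1pos)] at h2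
              have : k / (k+1) - 1 = -(1 / (k+1)) := by field_simp; ring
              linarith [h2, this ▸ h2]
            linarith [ih5, hlog]
  -- conclude
  obtain ⟨hn01, hSn, hmu01, hQ, hD⟩ := main T le_rfl
  have hVmin : ∑ τ ∈ Finset.Icc 1 T, a τ * (x τ - emp_mu a x T) ^ 2 ≤
      ∑ τ ∈ Finset.Icc 1 T, a τ * (x τ - c) ^ 2 := by
    have := biasvar a x c (emp_mu a x T) (emp_n a T) (emp_S a x T) rfl rfl hSn
    nlinarith [hann T le_rfl, sq_nonneg (c - emp_mu a x T), this]
  have hDT : ∑ τ ∈ Finset.Icc 1 T, a τ / max 1 (emp_n a τ) ≤ Real.log T + 1 := by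
    have h1 : Real.log (max 1 (emp_n a T)) ≤ Real.log T := by
      apply Real.log_le_log (by positivity)
      exact max_le (by exact_mod_cast hT) (hnle T le_rfl)
    have h2 : min (1:ℝ) (emp_n a T) ≤ 1 := min_le_left _ _
    linarith [hD, h1, h2]
  linarith [hQ, hVmin, hDT]

/-- Empirical-mean predictor bound with visitation indicators: with
`N t i = ∑_{τ=1}^{t} I τ i` and
`m t i = (∑_{τ=1}^{t-1} I τ i · ℓ τ i) / max 1 (N (t-1) i)`, the squared prediction
error on visited coordinates is within `|ι|·ln T + |ι|` of that of any fixed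
predictor `mstar : ι → [0,1]`. -/
theorem empirical_mean_predictor
    {ι : Type*} [Fintype ι] (T : ℕ) (hT : 1 ≤ T)
    (ℓ : ℕ → ι → ℝ) (I : ℕ → ι → ℝ)
    (hℓ : ∀ t ∈ Finset.Icc 1 T, ∀ i, ℓ t i ∈ Set.Icc (0 : ℝ) 1)
    (hI : ∀ t ∈ Finset.Icc 1 T, ∀ i, I t i = 0 ∨ I t i = 1)
    (N : ℕ → ι → ℝ) (hN : ∀ t, ∀ i, N t i = ∑ τ ∈ Finset.Icc 1 t, I τ i)
    (m : ℕ → ι → ℝ)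
    (hm : ∀ t ∈ Finset.Icc 1 T, ∀ i,
      m t i = (∑ τ ∈ Finset.Icc 1 (t - 1), I τ i * ℓ τ i) / max 1 (N (t - 1) i))
    (mstar : ι → ℝ) (hstar : ∀ i, mstar i ∈ Set.Icc (0 : ℝ) 1) :
    ∑ t ∈ Finset.Icc 1 T, ∑ i, I t i * (ℓ t i - m t i) ^ 2 ≤
      ∑ t ∈ Finset.Icc 1 T, ∑ i, I t i * (ℓ t i - mstar i) ^ 2
        + (Fintype.card ι : ℝ) * Real.log T + (Fintype.card ι : ℝ) := by
  have hper : ∀ i : ι, ∑ t ∈ Finset.Icc 1 T, I t i * (ℓ t i - m t i) ^ 2 ≤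
      (∑ t ∈ Finset.Icc 1 T, I t i * (ℓ t i - mstar i) ^ 2) + Real.log T + 1 := by
    intro i
    have hmm : ∀ t ∈ Finset.Icc 1 T, I t i * (ℓ t i - m t i) ^ 2 =
        I t i * (ℓ t i - emp_mu (fun τ => I τ i) (fun τ => ℓ τ i) (t - 1)) ^ 2 := by
      intro t ht
      rw [hm t ht i]
      have : emp_mu (fun τ => I τ i) (fun τ => ℓ τ i) (t - 1) =
          (∑ τ ∈ Finset.Icc 1 (t - 1), I τ i * ℓ τ i) / max 1 (N (t - 1) i) := by
        rw [hN (t - 1) i]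
        rfl
      rw [this]
    rw [Finset.sum_congr rfl hmm]
    exact emp_key T hT (fun τ => I τ i) (fun τ => ℓ τ i)
      (fun t ht => hℓ t ht i) (fun t ht => hI t ht i) (mstar i) (hstar i)
  rw [Finset.sum_comm (s := Finset.Icc 1 T) (t := (Finset.univ : Finset ι))]
  rw [Finset.sum_comm (s := Finset.Icc 1 T) (t := (Finset.univ : Finset ι))
    (f := fun t i => I t i * (ℓ t i - mstar i) ^ 2)]
  calc ∑ i : ι, ∑ t ∈ Finset.Icc 1 T, I t i * (ℓ t i - m t i) ^ 2
      ≤ ∑ i : ι, ((∑ t ∈ Finset.Icc 1 T, I t i * (ℓ t i - mstar i) ^ 2) + Real.log T + 1) :=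
        Finset.sum_le_sum fun i _ => hper i
    _ = ∑ i : ι, ∑ t ∈ Finset.Icc 1 T, I t i * (ℓ t i - mstar i) ^ 2
        + (Fintype.card ι : ℝ) * Real.log T + (Fintype.card ι : ℝ) := by
        simp [Finset.sum_add_distrib, Finset.sum_const, Finset.card_univ, nsmul_eq_mul]
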